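/- For every odd prime p and every positive integer j, the number of nonnegative integers n < p^p that are not the sum of exactly j positive (p−1)-th powers is at least p^{p−1}·(p−1)/2. -/

import Mathlib

/-- A positive integer `n` is `(j,k)`-representable if it is a sum of exactly `j`
positive `k`-th powers. -/
def IsRepr (n j k : ℕ) : Prop :=
  ∃ a : Fin j → ℕ, (∀ i, 0 < a i) ∧ ∑ i, (a i) ^ k = n

/-- Uniqueness of the "residue parameter": if `s, s' < p` and
`(j+p-s) ≡ (j+p-s') [MOD p]` then `s = s'`. -/
lemma stmt11_uniq (p s s' j : ℕ) (hs : s < p) (hs' : s' < p)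
    (h : (j + p - s) % p = (j + p - s') % p) : s = s' := by
  have e1 := Nat.div_add_mod (j + p - s) p
  have e2 := Nat.div_add_mod (j + p - s') p
  have hsum : p * ((j + p - s) / p) + s = p * ((j + p - s') / p) + s' := by omega
  have := congrArg (· % p) hsum
  simpa [Nat.mul_add_mod, Nat.mod_eq_of_lt hs, Nat.mod_eq_of_lt hs'] using this

/-- Key structural fact about representable numbers below `p^p`. -/
lemma stmt11_key (p j n : ℕ) (hp : p.Prime) (hrep : IsRepr n j (p - 1)) (hn : n < p ^ p) :
    ∃ s, s ≤ j ∧ s < p ∧ s * p ^ (p - 1) ≤ n ∧ n % p = (j + p - s) % p := by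
  haveI : Fact p.Prime := ⟨hp⟩
  have hp2 := hp.two_le
  obtain ⟨a, hpos, hsum⟩ := hrep
  set S : Finset (Fin j) := Finset.univ.filter (fun i => p ∣ a i) with hS
  have hsj : S.card ≤ j := by
    simpa using Finset.card_filter_le Finset.univ (fun i => p ∣ a i)
  have hle : S.card * p ^ (p - 1) ≤ n := by
    calc S.card * p ^ (p - 1) = ∑ _i ∈ S, p ^ (p - 1) := by
          rw [Finset.sum_const, smul_eq_mul]
      _ ≤ ∑ i ∈ S, (a i) ^ (p - 1) := by
          refine Finset.sum_le_sum fun i hi => Nat.pow_le_pow_left ?_ _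
          have : p ∣ a i := by simpa [hS] using hi
          exact Nat.le_of_dvd (hpos i) this
      _ ≤ ∑ i, (a i) ^ (p - 1) := Finset.sum_le_sum_of_subset (Finset.subset_univ S)
      _ = n := hsum
  have hpp : p ^ p = p * p ^ (p - 1) := by
    calc p ^ p = p ^ ((p - 1) + 1) := by congr 1; omega
      _ = p ^ (p - 1) * p := pow_succ _ _
      _ = p * p ^ (p - 1) := mul_comm _ _
  have hslt : S.card < p := by
    have : S.card * p ^ (p - 1) < p * p ^ (p - 1) := lt_of_le_of_lt hle (by rw [← hpp]; exact hn)
    exact Nat.lt_of_mul_lt_mul_right this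
  refine ⟨S.card, hsj, hslt, hle, ?_⟩
  have hzm : (n : ZMod p) = ((j - S.card : ℕ) : ZMod p) := by
    have h0 : (n : ZMod p) = ∑ i, ((a i : ZMod p)) ^ (p - 1) := by
      rw [← hsum]; push_cast; ring
    rw [h0, ← Finset.sum_filter_add_sum_filter_not Finset.univ (fun i => p ∣ a i)]
    have hz : ∑ i ∈ S, ((a i : ZMod p)) ^ (p - 1) = 0 := by
      refine Finset.sum_eq_zero fun i hi => ?_
      have hdvd : p ∣ a i := by simpa [hS] using hi
      have : (a i : ZMod p) = 0 := (ZMod.natCast_eq_zero_iff _ _).mpr hdvd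
      rw [this]; exact zero_pow (by omega)
    have ho : ∑ i ∈ Finset.univ.filter (fun i => ¬ p ∣ a i), ((a i : ZMod p)) ^ (p - 1)
        = ((Finset.univ.filter (fun i => ¬ p ∣ a i)).card : ZMod p) := by
      rw [Finset.sum_congr rfl (fun i hi => ?_), Finset.sum_const, nsmul_eq_mul, mul_one]
      have hnd : ¬ p ∣ a i := (Finset.mem_filter.mp hi).2
      have : (a i : ZMod p) ≠ 0 := fun h => hnd ((ZMod.natCast_eq_zero_iff _ _).mp h)
      exact ZMod.pow_card_sub_one_eq_one this
    have hcards : S.card + (Finset.univ.filter (fun i => ¬ p ∣ a i)).card = j := by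
      have := Finset.card_filter_add_card_filter_not (s := (Finset.univ : Finset (Fin j)))
        (p := fun i => p ∣ a i)
      simpa [hS] using this
    have : (Finset.univ.filter (fun i => ¬ p ∣ a i)).card = j - S.card := by omega
    rw [hS] at hz ⊢
    rw [hz, ho, this, zero_add]
  have hcast : ((j + p - S.card : ℕ) : ZMod p) = (n : ZMod p) := by
    have hrw : j + p - S.card = (j - S.card) + p := by omega
    rw [hrw, hzm]; push_cast; simp
  exact ((ZMod.natCast_eq_natCast_iff _ _ _).mp hcast).symm

/-- for every odd prime `p` and positive integer `j`, the number of
nonnegative integers `n < p^p` that are not the sum of exactly `j` positive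
`(p-1)`-th powers is at least `p^(p-1)·(p-1)/2`. -/
theorem stmt_11 (p j : ℕ) (hp : p.Prime) (hodd : Odd p) (hj : 0 < j) :
    p ^ (p - 1) * (p - 1) / 2 ≤
      {n : ℕ | n < p ^ p ∧ ¬ IsRepr n j (p - 1)}.ncard := by
  have hp2 : 2 ≤ p := hp.two_le
  set F : Finset ℕ := (Finset.Icc 1 (p - 1)).biUnion
    (fun s => (Finset.range (s * p ^ (p - 1))).filter (fun n => n % p = (j + p - s) % p))
    with hF
  have hpp : p ^ p = p * p ^ (p - 1) := by
    calc p ^ p = p ^ ((p - 1) + 1) := by congr 1; omega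
      _ = p ^ (p - 1) * p := pow_succ _ _
      _ = p * p ^ (p - 1) := mul_comm _ _
  -- F consists of non-representable numbers
  have hsub : (F : Set ℕ) ⊆ {n : ℕ | n < p ^ p ∧ ¬ IsRepr n j (p - 1)} := by
    intro n hn
    simp only [hF, Finset.coe_biUnion, Set.mem_iUnion, Finset.mem_coe, Finset.mem_filter,
      Finset.mem_range, Finset.mem_Icc] at hn
    obtain ⟨s, ⟨hs1, hs2⟩, hnlt, hmod⟩ := hn
    have hslt : s < p := by omega
    have hnp : n < p ^ p := by
      have : s * p ^ (p - 1) ≤ (p - 1) * p ^ (p - 1) :=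
        Nat.mul_le_mul_right _ hs2
      have hlt : (p - 1) * p ^ (p - 1) < p * p ^ (p - 1) := by
        have hpow : 0 < p ^ (p - 1) := Nat.pow_pos (by omega)
        exact (Nat.mul_lt_mul_right hpow).mpr (by omega)
      omega
    refine ⟨hnp, fun hrep => ?_⟩
    obtain ⟨s', hs'j, hs'p, hle, hmod'⟩ := stmt11_key p j n hp hrep hnp
    have hss : s = s' := stmt11_uniq p s s' j hslt hs'p (hmod.symm.trans hmod')
    subst hss
    omega
  have hfin : {n : ℕ | n < p ^ p ∧ ¬ IsRepr n j (p - 1)}.Finite :=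
    (Set.finite_Iio (p ^ p)).subset (fun n hn => hn.1)
  have hFcard : F.card ≤ {n : ℕ | n < p ^ p ∧ ¬ IsRepr n j (p - 1)}.ncard := by
    rw [← Set.ncard_coe_finset]
    exact Set.ncard_le_ncard hsub hfin
  -- lower bound on each piece
  have hpiece : ∀ s ∈ Finset.Icc 1 (p - 1), s * p ^ (p - 2) ≤
      ((Finset.range (s * p ^ (p - 1))).filter (fun n => n % p = (j + p - s) % p)).card := by
    intro s hs
    simp only [Finset.mem_Icc] at hs
    have hr : (j + p - s) % p < p := Nat.mod_lt _ (by omega)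
    have hpow : p ^ (p - 2) * p = p ^ (p - 1) := by
      rw [← pow_succ]; congr 1; omega
    have := Finset.card_le_card_of_injOn (f := fun k => k * p + (j + p - s) % p)
      (s := Finset.range (s * p ^ (p - 2)))
      (t := (Finset.range (s * p ^ (p - 1))).filter (fun n => n % p = (j + p - s) % p))
      ?_ ?_
    · simpa using this
    · intro k hk
      simp only [Finset.mem_coe, Finset.mem_range] at hk
      simp only [Finset.mem_coe, Finset.mem_filter, Finset.mem_range]
      constructor
      · have hexp : (k + 1) * p = k * p + p := by ring
        have : k * p + (j + p - s) % p < (k + 1) * p := by omega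
        have h2 : (k + 1) * p ≤ s * p ^ (p - 2) * p := Nat.mul_le_mul_right _ (by omega)
        rw [mul_assoc, hpow] at h2
        omega
      · rw [mul_comm, Nat.mul_add_mod]
        exact Nat.mod_eq_of_lt hr
    · intro k1 _ k2 _ h
      simp only at h
      have : k1 * p = k2 * p := by omega
      exact Nat.eq_of_mul_eq_mul_right (by omega) this
  -- disjointness
  have hdisj : ∀ s ∈ Finset.Icc 1 (p - 1), ∀ t ∈ Finset.Icc 1 (p - 1), s ≠ t →
      Disjoint ((Finset.range (s * p ^ (p - 1))).filter (fun n => n % p = (j + p - s) % p))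
        ((Finset.range (t * p ^ (p - 1))).filter (fun n => n % p = (j + p - t) % p)) := by
    intro s hs t ht hst
    simp only [Finset.mem_Icc] at hs ht
    rw [Finset.disjoint_left]
    intro n hn hn'
    simp only [Finset.mem_filter] at hn hn'
    exact hst (stmt11_uniq p s t j (by omega) (by omega) (hn.2.symm.trans hn'.2))
  have hsumcard : ∑ s ∈ Finset.Icc 1 (p - 1), s * p ^ (p - 2) ≤ F.card := by
    rw [hF, Finset.card_biUnion hdisj]
    exact Finset.sum_le_sum hpiece
  -- compute the sum
  have hgauss : (∑ s ∈ Finset.Icc 1 (p - 1), s * p ^ (p - 2)) * 2 = p ^ (p - 1) * (p - 1) := by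
    rw [← Finset.sum_mul]
    have h1 : ∑ i ∈ Finset.Icc 1 (p - 1), i = ∑ i ∈ Finset.range p, i := by
      rw [← Finset.Ico_add_one_right_eq_Icc, show p - 1 + 1 = p by omega,
        Finset.range_eq_Ico,
        ← Finset.sum_Ico_consecutive (fun i => i) (by omega : 0 ≤ 1) (by omega : 1 ≤ p)]
      simp
    have hg := Finset.sum_range_id_mul_two p
    have hpw : p ^ (p - 2) * p = p ^ (p - 1) := by rw [← pow_succ]; congr 1; omega
    calc (∑ i ∈ Finset.Icc 1 (p - 1), i) * p ^ (p - 2) * 2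
        = ((∑ i ∈ Finset.range p, i) * 2) * p ^ (p - 2) := by rw [h1]; ring
      _ = p * (p - 1) * p ^ (p - 2) := by rw [hg]
      _ = p ^ (p - 1) * (p - 1) := by rw [← hpw]; ring
  have hfinal : p ^ (p - 1) * (p - 1) ≤ F.card * 2 := by
    rw [← hgauss]
    exact Nat.mul_le_mul_right _ hsumcard
  calc p ^ (p - 1) * (p - 1) / 2 ≤ F.card * 2 / 2 := Nat.div_le_div_right hfinal
    _ = F.card := Nat.mul_div_cancel _ (by norm_num)
    _ ≤ _ := hFcard
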